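/- Every AP-rich subset of ℕ (i.e., every subset containing arithmetic progressions of arbitrary finite length) is not an I₀ set. -/

import Mathlib

/-- A sequence `ψ : ℕ → ℂ` is almost periodic if it is a uniform limit of
trigonometric polynomials. -/
def AlmostPeriodic (ψ : ℕ → ℂ) : Prop :=
  ∀ ε : ℝ, 0 < ε → ∃ (m : ℕ) (c : Fin m → ℂ) (α : Fin m → ℝ),
    ∀ n : ℕ, ‖ψ n - ∑ j, c j * Complex.exp (2 * (Real.pi : ℂ) * Complex.I * (n : ℂ) * (α j : ℂ))‖ < ε

/-- A set `E ⊆ ℕ` is an `I₀` set if every bounded function on `E` extends to an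
almost periodic sequence on `ℕ`. -/
def IsI0Set (E : Set ℕ) : Prop :=
  ∀ b : ℕ → ℂ, (∃ C : ℝ, ∀ n ∈ E, ‖b n‖ ≤ C) →
    ∃ ψ : ℕ → ℂ, AlmostPeriodic ψ ∧ ∀ r ∈ E, ψ r = b r

/-- A set `E ⊆ ℕ` is AP-rich if it contains arithmetic progressions of arbitrary
finite length. -/
def APRich (E : Set ℕ) : Prop :=
  ∀ k : ℕ, ∃ x y : ℕ, 0 < y ∧ ∀ i < k, x + i * y ∈ E

namespace APRichAux

variable {E : Set ℕ}

/-- In an AP-rich set one can find an AP of any length avoiding any finite set. -/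
lemma exists_ap_avoiding (hE : APRich E) (S : Finset ℕ) (l : ℕ) :
    ∃ p : ℕ × ℕ, 0 < p.2 ∧ (∀ i < l, p.1 + i * p.2 ∈ E) ∧ ∀ i < l, p.1 + i * p.2 ∉ S := by
  obtain ⟨x, y, hy, hmem⟩ := hE ((S.card + 1) * l)
  rcases Nat.eq_zero_or_pos l with hl | hl
  · exact ⟨(x, y), hy, fun i hi => absurd hi (by omega), fun i hi => absurd hi (by omega)⟩
  classical
  set B : Finset ℕ := (Finset.range (S.card + 1)).filter
      (fun j => ∃ i < l, x + (j * l + i) * y ∈ S) with hB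
  have hBcard : B.card ≤ S.card := by
    have hmem' : ∀ j, ∃ i, j ∈ B → i < l ∧ x + (j * l + i) * y ∈ S := by
      intro j
      by_cases hj : j ∈ B
      · obtain ⟨i, hi1, hi2⟩ := (Finset.mem_filter.1 hj).2
        exact ⟨i, fun _ => ⟨hi1, hi2⟩⟩
      · exact ⟨0, fun h => absurd h hj⟩
    choose f hf using hmem'
    apply Finset.card_le_card_of_injOn (fun j => x + (j * l + f j) * y)
    · intro j hj; exact (hf j hj).2
    · intro j1 h1 j2 h2 heq
      simp only at heq
      have hy' : y ≠ 0 := hy.ne'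
      have he : j1 * l + f j1 = j2 * l + f j2 := by
        have := Nat.add_left_cancel heq
        exact Nat.eq_of_mul_eq_mul_right hy this
      have hf1 : f j1 < l := (hf j1 h1).1
      have hf2 : f j2 < l := (hf j2 h2).1
      rcases lt_trichotomy j1 j2 with h | h | h
      · exfalso
        have : (j1 + 1) * l ≤ j2 * l := Nat.mul_le_mul_right _ (by omega)
        have e1 : (j1 + 1) * l = j1 * l + l := by ring
        omega
      · exact h
      · exfalso
        have : (j2 + 1) * l ≤ j1 * l := Nat.mul_le_mul_right _ (by omega)
        have e1 : (j2 + 1) * l = j2 * l + l := by ring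
        omega
  have hgood : ∃ j ∈ Finset.range (S.card + 1), j ∉ B := by
    by_contra h
    push_neg at h
    have hsub : Finset.range (S.card + 1) ⊆ B := fun j hj => h j hj
    have := Finset.card_le_card hsub
    simp only [Finset.card_range] at this
    omega
  obtain ⟨j, hjr, hjB⟩ := hgood
  have hjlt : j < S.card + 1 := Finset.mem_range.1 hjr
  refine ⟨(x + j * l * y, y), hy, ?_, ?_⟩
  · intro i hi
    have he : x + j * l * y + i * y = x + (j * l + i) * y := by ring
    rw [he]
    apply hmem
    calc j * l + i < (j + 1) * l := by nlinarith
      _ ≤ (S.card + 1) * l := Nat.mul_le_mul_right _ (by omega)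
  · intro i hi
    have he : x + j * l * y + i * y = x + (j * l + i) * y := by ring
    rw [he]
    intro hS
    exact hjB (Finset.mem_filter.2 ⟨hjr, ⟨i, hi, hS⟩⟩)

noncomputable def pickP (hE : APRich E) (S : Finset ℕ) (l : ℕ) : ℕ × ℕ :=
  Classical.choose (exists_ap_avoiding hE S l)

lemma pickP_spec (hE : APRich E) (S : Finset ℕ) (l : ℕ) :
    0 < (pickP hE S l).2 ∧ (∀ i < l, (pickP hE S l).1 + i * (pickP hE S l).2 ∈ E) ∧
      ∀ i < l, (pickP hE S l).1 + i * (pickP hE S l).2 ∉ S :=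
  Classical.choose_spec (exists_ap_avoiding hE S l)

noncomputable def stF (hE : APRich E) : ℕ → Finset ℕ
  | 0 => ∅
  | t + 1 => stF hE t ∪ (Finset.range t).image
      (fun i => (pickP hE (stF hE t) t).1 + i * (pickP hE (stF hE t) t).2)

noncomputable def Xf (hE : APRich E) (t : ℕ) : ℕ := (pickP hE (stF hE t) t).1
noncomputable def Yf (hE : APRich E) (t : ℕ) : ℕ := (pickP hE (stF hE t) t).2

lemma Yf_pos (hE : APRich E) (t : ℕ) : 0 < Yf hE t := (pickP_spec hE _ t).1

lemma Xf_mem (hE : APRich E) {t i : ℕ} (hi : i < t) : Xf hE t + i * Yf hE t ∈ E :=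
  (pickP_spec hE _ t).2.1 i hi

lemma Xf_avoid (hE : APRich E) {t i : ℕ} (hi : i < t) : Xf hE t + i * Yf hE t ∉ stF hE t :=
  (pickP_spec hE _ t).2.2 i hi

lemma mem_stF_succ (hE : APRich E) {t i : ℕ} (hi : i < t) :
    Xf hE t + i * Yf hE t ∈ stF hE (t + 1) := by
  rw [stF]
  exact Finset.mem_union_right _ (Finset.mem_image.2 ⟨i, Finset.mem_range.2 hi, rfl⟩)

lemma stF_mono (hE : APRich E) {t t' : ℕ} (h : t ≤ t') : stF hE t ⊆ stF hE t' := by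
  induction t', h using Nat.le_induction with
  | base => exact subset_rfl
  | succ n hn ih =>
    refine ih.trans ?_
    rw [stF]
    exact Finset.subset_union_left

lemma ap_disjoint (hE : APRich E) {t t' i i' : ℕ} (h : t < t') (hi : i < t) (hi' : i' < t') :
    Xf hE t + i * Yf hE t ≠ Xf hE t' + i' * Yf hE t' := by
  intro heq
  have h1 : Xf hE t + i * Yf hE t ∈ stF hE t' := stF_mono hE h (mem_stF_succ hE hi)
  rw [heq] at h1
  exact Xf_avoid hE hi' h1

open scoped Classical in
noncomputable def bFun (hE : APRich E) : ℕ → ℂ := fun n =>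
  if ∃ t, ∃ i, i < t ∧ n = Xf hE t + i * Yf hE t ∧ ∃ s : ℕ, i = 2 ^ s then 1 else 0

/-- Simultaneous-approximation pigeonhole: a bounded multiple of any `y` makes all
`q*y*α j` close to integers. -/
lemma exists_almost_int (m : ℕ) (α : Fin m → ℝ) (y : ℕ) {δ : ℝ} (hδ : 0 < δ) :
    ∃ q : ℕ, 0 < q ∧ q ≤ ⌈1/δ⌉₊ ^ m ∧ ∀ j, ∃ z : ℤ, |(q : ℝ) * y * α j - z| ≤ δ := by
  set N := ⌈1/δ⌉₊ with hNdef
  have hN : 0 < N := Nat.ceil_pos.2 (by positivity)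
  have hF : ∀ t : ℕ, ∀ j, ⌊Int.fract ((t : ℝ) * y * α j) * N⌋₊ < N := by
    intro t j
    apply (Nat.floor_lt (mul_nonneg (Int.fract_nonneg _) (Nat.cast_nonneg _))).2
    calc Int.fract ((t : ℝ) * y * α j) * N < 1 * N := by
          apply mul_lt_mul_of_pos_right (Int.fract_lt_one _) (by exact_mod_cast hN)
      _ = N := one_mul _
  set F : Fin (N ^ m + 1) → (Fin m → Fin N) := fun t j =>
    ⟨⌊Int.fract ((t : ℝ) * y * α j) * N⌋₊, hF t j⟩ with hFdef
  have hcard : Fintype.card (Fin m → Fin N) < Fintype.card (Fin (N ^ m + 1)) := by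
    simp
  obtain ⟨t1, t2, hne, heq⟩ := Fintype.exists_ne_map_eq_of_card_lt F hcard
  have key : ∀ a b : Fin (N ^ m + 1), (a : ℕ) < (b : ℕ) → F a = F b →
      ∃ q : ℕ, 0 < q ∧ q ≤ N ^ m ∧ ∀ j, ∃ z : ℤ, |(q : ℝ) * y * α j - z| ≤ δ := by
    intro a b hab hFeq
    refine ⟨(b : ℕ) - (a : ℕ), by omega, by have := b.isLt; omega, ?_⟩
    intro j
    have hj := congrFun hFeq j
    set u := Int.fract ((a : ℝ) * y * α j) with hu
    set v := Int.fract ((b : ℝ) * y * α j) with hv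
    have hfl : ⌊u * N⌋₊ = ⌊v * N⌋₊ := congrArg Fin.val hj
    have hu1 : ((⌊u * N⌋₊ : ℕ) : ℝ) ≤ u * N :=
      Nat.floor_le (mul_nonneg (by rw [hu]; exact Int.fract_nonneg _) (Nat.cast_nonneg _))
    have hu2 : u * N < (⌊u * N⌋₊ : ℕ) + 1 := Nat.lt_floor_add_one _
    have hv1 : ((⌊v * N⌋₊ : ℕ) : ℝ) ≤ v * N :=
      Nat.floor_le (mul_nonneg (by rw [hv]; exact Int.fract_nonneg _) (Nat.cast_nonneg _))
    have hv2 : v * N < (⌊v * N⌋₊ : ℕ) + 1 := Nat.lt_floor_add_one _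
    rw [hfl] at hu1 hu2
    have hdiff : |v - u| * N < 1 := by
      have e1 : |v - u| * N = |v * N - u * N| := by
        rw [show v * (N : ℝ) - u * N = (v - u) * N by ring, abs_mul,
          abs_of_nonneg (by positivity : (0:ℝ) ≤ (N:ℝ))]
      rw [e1, abs_sub_lt_iff]
      constructor <;> linarith
    have hNR : (0 : ℝ) < N := by exact_mod_cast hN
    have h2 : |v - u| ≤ δ := by
      have hlt : |v - u| < 1 / N := by
        rw [lt_div_iff₀ hNR]; exact hdiff
      have hle : 1 / (N : ℝ) ≤ δ := by
        rw [div_le_iff₀ hNR]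
        have := Nat.le_ceil (1/δ)
        rw [← hNdef] at this
        calc (1 : ℝ) = δ * (1/δ) := by field_simp
          _ ≤ δ * N := by apply mul_le_mul_of_nonneg_left this hδ.le
      exact hlt.le.trans hle
    refine ⟨⌊(b : ℝ) * y * α j⌋ - ⌊(a : ℝ) * y * α j⌋, ?_⟩
    have hcast : (((b : ℕ) - (a : ℕ) : ℕ) : ℝ) = ((b : ℕ) : ℝ) - ((a : ℕ) : ℝ) := by
      push_cast [Nat.cast_sub hab.le]; ring
    have hrw : (((b : ℕ) - (a : ℕ) : ℕ) : ℝ) * y * α j -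
        ((⌊(b : ℝ) * y * α j⌋ - ⌊(a : ℝ) * y * α j⌋ : ℤ) : ℝ) = v - u := by
      rw [hcast, hv, hu, Int.fract, Int.fract]
      push_cast
      ring
    rw [hrw]
    exact h2
  have hne' : (t1 : ℕ) ≠ (t2 : ℕ) := fun h => hne (Fin.ext h)
  rcases hne'.lt_or_gt with h | h
  · exact key t1 t2 h heq
  · exact key t2 t1 h heq.symm

end APRichAux

open APRichAux in
/-- AP-rich sets are not `I₀`. -/
theorem apRich_not_I0 (E : Set ℕ) (hE : APRich E) : ¬ IsI0Set E := by
  classical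
  intro hI0
  have hbbd : ∃ C : ℝ, ∀ n ∈ E, ‖bFun hE n‖ ≤ C := by
    refine ⟨1, fun n _ => ?_⟩
    unfold bFun
    split <;> simp
  obtain ⟨ψ, hψAP, hψint⟩ := hI0 (bFun hE) hbbd
  obtain ⟨m, c, α, hP⟩ := hψAP (1/4) (by norm_num)
  set P : ℕ → ℂ := fun n =>
    ∑ j, c j * Complex.exp (2 * (Real.pi : ℂ) * Complex.I * (n : ℂ) * (α j : ℂ)) with hPdef
  set S := ∑ j, ‖c j‖ with hSdef
  have hS0 : 0 ≤ S := Finset.sum_nonneg fun j _ => norm_nonneg _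
  set δ := (1/4 : ℝ) / (13 * (S + 1)) with hδdef
  have hδ : 0 < δ := by positivity
  have hδ52 : δ ≤ 1/52 := by
    rw [hδdef, div_le_div_iff₀ (by positivity) (by norm_num)]
    nlinarith
  set M := ⌈1/δ⌉₊ ^ m with hMdef
  set T := 3 * M + 1 with hTdef
  set x := Xf hE T with hxdef
  set y := Yf hE T with hydef
  have hy : 0 < y := Yf_pos hE T
  obtain ⟨q, hq0, hqM, hz⟩ := exists_almost_int m α y hδ
  rw [← hMdef] at hqM
  -- shift bound for the trigonometric polynomial
  have hPshift : ∀ n : ℕ, ‖P (n + q * y) - P n‖ ≤ 1/4 := by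
    intro n
    have hterm : ∀ j : Fin m,
        ‖c j * Complex.exp (2 * (Real.pi : ℂ) * Complex.I * ((n + q * y : ℕ) : ℂ) * (α j : ℂ)) -
          c j * Complex.exp (2 * (Real.pi : ℂ) * Complex.I * (n : ℂ) * (α j : ℂ))‖
          ≤ ‖c j‖ * (13 * δ) := by
      intro j
      obtain ⟨z, hzj⟩ := hz j
      set A : ℂ := 2 * (Real.pi : ℂ) * Complex.I * (n : ℂ) * (α j : ℂ) with hA
      set B : ℂ := 2 * (Real.pi : ℂ) * Complex.I * ((q * y : ℕ) : ℂ) * (α j : ℂ) with hB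
      have hAB : 2 * (Real.pi : ℂ) * Complex.I * ((n + q * y : ℕ) : ℂ) * (α j : ℂ) = A + B := by
        rw [hA, hB]; push_cast; ring
      rw [hAB, Complex.exp_add,
        show c j * (Complex.exp A * Complex.exp B) - c j * Complex.exp A =
          c j * Complex.exp A * (Complex.exp B - 1) by ring, norm_mul, norm_mul]
      have hAnorm : ‖Complex.exp A‖ = 1 := by
        have : A = ((2 * Real.pi * n * α j : ℝ) : ℂ) * Complex.I := by
          rw [hA]; push_cast; ring
        rw [this, Complex.norm_exp_ofReal_mul_I]
      rw [hAnorm, mul_one]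
      apply mul_le_mul_of_nonneg_left _ (norm_nonneg _)
      -- ‖exp B - 1‖ ≤ 13 δ
      set w : ℂ := ((2 * Real.pi * ((q : ℝ) * y * α j - z) : ℝ) : ℂ) * Complex.I with hw
      have hBw : Complex.exp B = Complex.exp w := by
        have : B = w + (z : ℂ) * (2 * (Real.pi : ℂ) * Complex.I) := by
          rw [hB, hw]; push_cast; ring
        rw [this, Complex.exp_add, Complex.exp_int_mul_two_pi_mul_I, mul_one]
      have hwnorm : ‖w‖ = 2 * Real.pi * |(q : ℝ) * y * α j - z| := by
        rw [hw, norm_mul, Complex.norm_I, mul_one,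
          Complex.norm_real, Real.norm_eq_abs, abs_mul, abs_of_nonneg (by positivity : (0:ℝ) ≤ 2 * Real.pi)]
      have hπ : Real.pi < 3.15 := Real.pi_lt_d2
      have hπ0 : 0 < Real.pi := Real.pi_pos
      have hwle : ‖w‖ ≤ 2 * Real.pi * δ := by
        rw [hwnorm]
        apply mul_le_mul_of_nonneg_left hzj (by positivity)
      have hw1 : ‖w‖ ≤ 1 := by
        calc ‖w‖ ≤ 2 * Real.pi * δ := hwle
          _ ≤ 2 * 3.15 * (1/52) := by
            apply mul_le_mul (by nlinarith) hδ52 hδ.le (by norm_num)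
          _ ≤ 1 := by norm_num
      calc ‖Complex.exp B - 1‖ = ‖Complex.exp w - 1‖ := by rw [hBw]
        _ ≤ 2 * ‖w‖ := by
            exact Complex.norm_exp_sub_one_le hw1
        _ ≤ 2 * (2 * Real.pi * δ) := by
            exact mul_le_mul_of_nonneg_left hwle (by norm_num)
        _ ≤ 13 * δ := by nlinarith
    have hsum : P (n + q * y) - P n = ∑ j,
        (c j * Complex.exp (2 * (Real.pi : ℂ) * Complex.I * ((n + q * y : ℕ) : ℂ) * (α j : ℂ)) -
         c j * Complex.exp (2 * (Real.pi : ℂ) * Complex.I * (n : ℂ) * (α j : ℂ))) := by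
      rw [hPdef]; rw [← Finset.sum_sub_distrib]
    rw [hsum]
    calc ‖∑ j, (c j * Complex.exp (2 * (Real.pi : ℂ) * Complex.I * ((n + q * y : ℕ) : ℂ) * (α j : ℂ)) -
         c j * Complex.exp (2 * (Real.pi : ℂ) * Complex.I * (n : ℂ) * (α j : ℂ)))‖
        ≤ ∑ j, ‖c j * Complex.exp (2 * (Real.pi : ℂ) * Complex.I * ((n + q * y : ℕ) : ℂ) * (α j : ℂ)) -
         c j * Complex.exp (2 * (Real.pi : ℂ) * Complex.I * (n : ℂ) * (α j : ℂ))‖ :=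
          norm_sum_le _ _
      _ ≤ ∑ j, ‖c j‖ * (13 * δ) := Finset.sum_le_sum fun j _ => hterm j
      _ = S * (13 * δ) := by rw [← Finset.sum_mul, hSdef]
      _ ≤ (S + 1) * (13 * δ) := by nlinarith
      _ = 1/4 := by rw [hδdef]; field_simp
  have hshift : ∀ n : ℕ, ‖ψ (n + q * y) - ψ n‖ < 3/4 := by
    intro n
    have h1 := hP (n + q * y)
    have h2 := hP n
    have h3 := hPshift n
    have hsplit : ψ (n + q * y) - ψ n =
        (ψ (n + q * y) - P (n + q * y)) + (P (n + q * y) - P n) + (P n - ψ n) := by ring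
    calc ‖ψ (n + q * y) - ψ n‖
        ≤ ‖ψ (n + q * y) - P (n + q * y)‖ + ‖P (n + q * y) - P n‖ + ‖P n - ψ n‖ := by
          rw [hsplit]; exact norm_add₃_le
      _ < 1/4 + 1/4 + 1/4 := by
          have h2' : ‖P n - ψ n‖ < 1/4 := by rw [norm_sub_rev]; exact h2
          apply add_lt_add_of_lt_of_lt (add_lt_add_of_lt_of_le h1 h3) h2'
      _ = 3/4 := by norm_num
  -- the defect index
  set s := Nat.log 2 q + 1 with hsdef
  set i := 2 ^ s with hidef
  have hqi : q < i := Nat.lt_pow_succ_log_self (by norm_num) q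
  have hiq : i ≤ 2 * q := by
    rw [hidef, hsdef, pow_succ, mul_comm]
    exact Nat.mul_le_mul_left 2 (Nat.pow_log_le_self 2 hq0.ne')
  have hi_lt : i < T := by omega
  have hiq_lt : i + q < T := by omega
  have hb1 : bFun hE (x + i * y) = 1 := by
    unfold bFun
    rw [if_pos ⟨T, i, hi_lt, rfl, s, rfl⟩]
  have hnotpow : ¬ ∃ s' : ℕ, i + q = 2 ^ s' := by
    rintro ⟨s', hs'⟩
    have h1 : 2 ^ s < 2 ^ s' := by omega
    have h2 : 2 ^ s' < 2 ^ (s + 1) := by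
      rw [pow_succ]; omega
    have hs1 : s < s' := (Nat.pow_lt_pow_iff_right (by norm_num)).1 h1
    have hs2 : s' < s + 1 := (Nat.pow_lt_pow_iff_right (by norm_num)).1 h2
    omega
  have hb0 : bFun hE (x + (i + q) * y) = 0 := by
    unfold bFun
    rw [if_neg]
    rintro ⟨t', i', hi', heq, s', hs'⟩
    rcases eq_or_ne t' T with rfl | hne
    · have : i + q = i' := by
        have := Nat.add_left_cancel heq
        exact Nat.eq_of_mul_eq_mul_right hy this
      exact hnotpow ⟨s', by omega⟩
    · rcases hne.lt_or_gt with h | h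
      · exact ap_disjoint hE h hi' hiq_lt (heq.symm)
      · exact ap_disjoint hE h hiq_lt hi' heq
  have hE1 : x + i * y ∈ E := Xf_mem hE hi_lt
  have hE2 : x + (i + q) * y ∈ E := Xf_mem hE hiq_lt
  have e1 : ψ (x + i * y) = 1 := (hψint _ hE1).trans hb1
  have e2 : ψ (x + (i + q) * y) = 0 := (hψint _ hE2).trans hb0
  have hfinal := hshift (x + i * y)
  rw [show x + i * y + q * y = x + (i + q) * y by ring] at hfinal
  rw [e1, e2] at hfinal
  norm_num at hfinal
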